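/- Let C be a projective curve over an algebraically closed field k of characteristic 0 with normalization π : Z → C. Define Div⁰_{Z/C}(k) as the kernel of Div⁰_Z(k) → WDiv(Z) → WDiv(C) (Cartier-to-Weil followed by proper push-forward of cycles) and Lie(Div⁰_{Z/C}) as the kernel of Lie(Div⁰_Z) → LDiv(Z) → LDiv(C). Then Div⁰_{Z/C}(k) is a free abelian group of finite rank and Lie(Div⁰_{Z/C}) is a finite-dimensional k-vector space; consequently these data determine a formal subgroup Div⁰_{Z/C} of Div⁰_Z. -/

import Mathlib

/- STATEMENT 19: Let C be a projective curve over an algebraically closed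
field k of characteristic 0 with normalization π : Z → C.  Define
Div⁰_{Z/C}(k) = ker(Div⁰_Z(k) → WDiv(Z) → WDiv(C)) and
Lie(Div⁰_{Z/C}) = ker(Lie(Div⁰_Z) → LDiv(Z) → LDiv(C)).  Then Div⁰_{Z/C}(k)
is a free abelian group of finite rank and Lie(Div⁰_{Z/C}) is a
finite-dimensional k-vector space (consequently these data determine a
formal subgroup Div⁰_{Z/C} of Div⁰_Z).  Model: Z normal, so Div_Z(k) ≅
WDiv(Z) = Z →₀ ℤ; Div⁰ means degree 0 on every connected component; the
push-forward of cycles is Finsupp.mapDomain π; π is injective away from the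
finite preimage S of the singular locus.  The Lie part is modelled as in the
residue/adic model: Lie(Div_Z) = ⊕_q K̂_q/Ô_q via Laurent series, Ô_{C,p}
via its image A p ⊆ Π_{q→p} k[[t]] of finite codimension. -/

open PowerSeries DirectSum

/-- Laurent series with coefficients vanishing below `ν`. -/
noncomputable def lowSupp (k : Type*) [Field k] (ν : ℤ) :
    Submodule k (LaurentSeries k) where
  carrier := {f | ∀ n, n < ν → f.coeff n = 0}
  add_mem' := by
    intro a b ha hb n hn
    simp [HahnSeries.coeff_add, ha n hn, hb n hn]
  zero_mem' := by intro n hn; simp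
  smul_mem' := by
    intro c a ha n hn
    simp [HahnSeries.coeff_smul, ha n hn]

variable {k : Type} [Field k]

/-- the "residue of f·u dX" functional -/
noncomputable def resMul (u : PowerSeries k) : LaurentSeries k →ₗ[k] k where
  toFun f := ((f * (u : LaurentSeries k)).coeff (-1))
  map_add' a b := by simp [add_mul]
  map_smul' c a := by
    show ((c • a) * (u : LaurentSeries k)).coeff (-1) = c * ((a * (u : LaurentSeries k)).coeff (-1))
    rw [← HahnSeries.C_mul_eq_smul, mul_assoc, HahnSeries.C_mul_eq_smul,
      HahnSeries.coeff_smul, smul_eq_mul]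

theorem resMul_lowSupp (u : PowerSeries k) :
    lowSupp k 0 ≤ LinearMap.ker (resMul u) := by
  intro f hf
  simp only [LinearMap.mem_ker, resMul, LinearMap.coe_mk, AddHom.coe_mk]
  rw [HahnSeries.coeff_mul]
  apply Finset.sum_eq_zero
  intro ij hij
  rw [Finset.mem_addAntidiagonal] at hij
  obtain ⟨h1, h2, h3⟩ := hij
  rcases lt_or_ge ij.1 0 with h | h
  · rw [hf ij.1 h, zero_mul]
  · have h2' : ij.2 < 0 := by omega
    rw [PowerSeries.coeff_coe, if_pos h2', mul_zero]

/-- the residue functional on the quotient -/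
noncomputable def resMulQ (u : PowerSeries k) :
    (LaurentSeries k ⧸ lowSupp k 0) →ₗ[k] k :=
  Submodule.liftQ _ (resMul u) (resMul_lowSupp u)

theorem resMulQ_mk (u : PowerSeries k) (f : LaurentSeries k) :
    resMulQ u ((lowSupp k 0).mkQ f) = resMul u f := by
  rw [Submodule.mkQ_apply, resMulQ, Submodule.liftQ_apply]

theorem resMul_add (u v : PowerSeries k) (f : LaurentSeries k) :
    resMul (u + v) f = resMul u f + resMul v f := by
  show (f * ((u + v : PowerSeries k) : LaurentSeries k)).coeff (-1) = _
  push_cast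
  rw [mul_add, HahnSeries.coeff_add]
  rfl

theorem resMul_smul (c : k) (u : PowerSeries k) (f : LaurentSeries k) :
    resMul (c • u) f = c * resMul u f := by
  show (f * ((c • u : PowerSeries k) : LaurentSeries k)).coeff (-1) = _
  rw [PowerSeries.coe_smul, ← HahnSeries.C_mul_eq_smul, mul_left_comm,
    HahnSeries.C_mul_eq_smul, HahnSeries.coeff_smul, smul_eq_mul]
  rfl

theorem resMul_zero' (f : LaurentSeries k) : resMul (0 : PowerSeries k) f = 0 := by
  show (f * ((0 : PowerSeries k) : LaurentSeries k)).coeff (-1) = 0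
  rw [PowerSeries.coe_zero, mul_zero, HahnSeries.coeff_zero]

theorem resMulQ_add (u v : PowerSeries k) (x : LaurentSeries k ⧸ lowSupp k 0) :
    resMulQ (u + v) x = resMulQ u x + resMulQ v x := by
  obtain ⟨f, rfl⟩ := Submodule.mkQ_surjective _ x
  rw [resMulQ_mk, resMulQ_mk, resMulQ_mk, resMul_add]

theorem resMulQ_smul (c : k) (u : PowerSeries k) (x : LaurentSeries k ⧸ lowSupp k 0) :
    resMulQ (c • u) x = c * resMulQ u x := by
  obtain ⟨f, rfl⟩ := Submodule.mkQ_surjective _ x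
  rw [resMulQ_mk, resMulQ_mk, resMul_smul]

theorem resMulQ_zero' (x : LaurentSeries k ⧸ lowSupp k 0) :
    resMulQ (0 : PowerSeries k) x = 0 := by
  obtain ⟨f, rfl⟩ := Submodule.mkQ_surjective _ x
  rw [resMulQ_mk, resMul_zero']

theorem derivativeFun_X_pow (n : ℕ) (hn : 1 ≤ n) :
    (PowerSeries.X ^ n : PowerSeries k).derivativeFun = (n : k) • PowerSeries.X ^ (n - 1) := by
  ext m
  show PowerSeries.coeff m (PowerSeries.derivative k (PowerSeries.X ^ n)) = PowerSeries.coeff m ((n : k) • PowerSeries.X ^ (n - 1))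
  rw [PowerSeries.coeff_derivativeFun, PowerSeries.coeff_X_pow, PowerSeries.coeff_smul,
    PowerSeries.coeff_X_pow, smul_eq_mul]
  by_cases h : m + 1 = n
  · rw [if_pos h, if_pos (by omega), one_mul, mul_one]
    exact_mod_cast congrArg (Nat.cast : ℕ → k) h
  · rw [if_neg h, if_neg (by omega), zero_mul, mul_zero]

theorem resMul_X_pow (f : LaurentSeries k) (n : ℕ) (hn : 1 ≤ n) :
    resMul (PowerSeries.derivativeFun (PowerSeries.X ^ n)) f = (n : k) * f.coeff (-(n : ℤ)) := by
  rw [derivativeFun_X_pow n hn]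
  show (f * (((n : k) • PowerSeries.X ^ (n - 1) : PowerSeries k) : LaurentSeries k)).coeff (-1) = _
  rw [PowerSeries.coe_smul, ← HahnSeries.C_mul_eq_smul, mul_left_comm,
    HahnSeries.C_mul_eq_smul, HahnSeries.coeff_smul, smul_eq_mul]
  congr 1
  show (f * (HahnSeries.ofPowerSeries ℤ k) (PowerSeries.X ^ (n - 1))).coeff (-1) = _
  rw [HahnSeries.ofPowerSeries_X_pow]
  have h1 : (-1 : ℤ) = (-(n : ℤ)) + ((n - 1 : ℕ) : ℤ) := by
    have : ((n - 1 : ℕ) : ℤ) = (n : ℤ) - 1 := by omega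
    omega
  rw [h1, HahnSeries.coeff_mul_single_add, mul_one]

theorem quot_eq_zero [CharZero k] (x : LaurentSeries k ⧸ lowSupp k 0)
    (h : ∀ n : ℕ, 1 ≤ n →
      resMulQ (PowerSeries.derivativeFun (PowerSeries.X ^ n)) x = 0) : x = 0 := by
  obtain ⟨f, rfl⟩ := Submodule.mkQ_surjective _ x
  rw [Submodule.mkQ_apply, Submodule.Quotient.mk_eq_zero]
  intro n hn
  have h2 := h (-n).toNat (by omega)
  rw [resMulQ_mk, resMul_X_pow f _ (by omega)] at h2
  have hne : (((-n).toNat : ℕ) : k) ≠ 0 := Nat.cast_ne_zero.mpr (by omega)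
  have h3 : f.coeff (-(((-n).toNat : ℕ) : ℤ)) = 0 := by
    rcases mul_eq_zero.mp h2 with h' | h'
    · exact absurd h' hne
    · exact h'
  have : (-(((-n).toNat : ℕ) : ℤ)) = n := by omega
  rwa [this] at h3

/-- The residue-pairing functional attached to a family `ε` of Laurent tails. -/
noncomputable def phiAux {α : Type} [Fintype α]
    (Mp : Submodule k (α → PowerSeries k))
    (ε : α → (LaurentSeries k ⧸ lowSupp k 0)) : ↥Mp →ₗ[k] k where
  toFun g := ∑ q : α,
    resMulQ (PowerSeries.derivativeFun ((g : α → PowerSeries k) q)) (ε q)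
  map_add' a b := by
    rw [← Finset.sum_add_distrib]
    apply Finset.sum_congr rfl
    intro q _
    rw [Submodule.coe_add, Pi.add_apply, PowerSeries.derivativeFun_add, resMulQ_add]
  map_smul' c a := by
    rw [RingHom.id_apply, smul_eq_mul, Finset.mul_sum]
    apply Finset.sum_congr rfl
    intro q _
    rw [Submodule.coe_smul, Pi.smul_apply, PowerSeries.derivativeFun_smul, resMulQ_smul]

theorem phiAux_apply {α : Type} [Fintype α] (Mp : Submodule k (α → PowerSeries k))
    (ε : α → (LaurentSeries k ⧸ lowSupp k 0)) (g : ↥Mp) :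
    phiAux Mp ε g = ∑ q : α,
      resMulQ (PowerSeries.derivativeFun ((g : α → PowerSeries k) q)) (ε q) := rfl

theorem phiAux_add_eps {α : Type} [Fintype α] (Mp : Submodule k (α → PowerSeries k))
    (ε ε' : α → (LaurentSeries k ⧸ lowSupp k 0)) (g : ↥Mp) :
    phiAux Mp (fun q => ε q + ε' q) g = phiAux Mp ε g + phiAux Mp ε' g := by
  simp only [phiAux_apply, ← Finset.sum_add_distrib, map_add]

theorem phiAux_smul_eps {α : Type} [Fintype α] (Mp : Submodule k (α → PowerSeries k))
    (c : k) (ε : α → (LaurentSeries k ⧸ lowSupp k 0)) (g : ↥Mp) :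
    phiAux Mp (fun q => c • ε q) g = c * phiAux Mp ε g := by
  simp only [phiAux_apply, Finset.mul_sum, map_smul, smul_eq_mul]

/-- Part 1: the group of divisors supported over the singular locus is free of finite rank. -/
theorem part1_free {Z C : Type} [DecidableEq Z] (π : Z → C) (S : Finset Z)
    (hinj : ∀ q ∉ S, ∀ q', π q' = π q → q' = q)
    (A : AddSubgroup (Z →₀ ℤ))
    (hA' : ∀ D ∈ A, Finsupp.mapDomain π D = 0) :
    ∃ n : ℕ, Nonempty (↥A ≃+ (Fin n → ℤ)) := by
  classical
  have hsupp : ∀ D ∈ A, ∀ q, q ∉ S → D q = 0 := by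
    intro D hD q hq
    have h0 := hA' D hD
    have key : (Finsupp.mapDomain π D) (π q) = D q := by
      rw [Finsupp.mapDomain, Finsupp.sum_apply, Finsupp.sum, Finset.sum_eq_single q]
      · rw [Finsupp.single_apply, if_pos rfl]
      · intro b _ hbq
        rw [Finsupp.single_apply, if_neg fun h => hbq (hinj q hq b h)]
      · intro hq'
        rw [Finsupp.notMem_support_iff.mp hq', Finsupp.single_zero, Finsupp.zero_apply]
    rw [h0, Finsupp.zero_apply] at key
    exact key.symm
  let f : ↥A →ₗ[ℤ] (S → ℤ) :=
    { toFun := fun D s => (D : Z →₀ ℤ) s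
      map_add' := fun a b => by funext s; simp
      map_smul' := fun c a => by funext s; simp }
  have hf : Function.Injective f := by
    intro a b hab
    apply Subtype.ext
    ext q
    by_cases hq : q ∈ S
    · exact congrFun hab ⟨q, hq⟩
    · rw [hsupp a.1 a.2 q hq, hsupp b.1 b.2 q hq]
  obtain ⟨n, b⟩ := Submodule.basisOfPid (Pi.basisFun ℤ S) (LinearMap.range f)
  exact ⟨n, ⟨((LinearEquiv.ofInjective f hf).trans
    (b.repr.trans (Finsupp.linearEquivFunOnFinite ℤ ℤ (Fin n)))).toAddEquiv⟩⟩

theorem derivativeFun_zero' : (0 : PowerSeries k).derivativeFun = 0 := by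
  ext m
  show PowerSeries.coeff m (PowerSeries.derivative k 0) = PowerSeries.coeff m 0
  rw [PowerSeries.coeff_derivativeFun]
  simp

set_option maxHeartbeats 2000000 in
theorem div_zero_relative_is_formal_group_data
    (k : Type) [Field k] [IsAlgClosed k] [CharZero k]
    (Z C : Type) [DecidableEq Z] (π : Z → C) [∀ p, Fintype {q // π q = p}]
    (S : Finset Z)  -- preimage of the singular locus of C
    (hinj : ∀ q ∉ S, ∀ q', π q' = π q → q' = q)
    (ι : Type) (comp : Z → ι)  -- connected components of Z
    -- the k-points part: A = ker(Div⁰_Z(k) → WDiv(Z) → WDiv(C))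
    (A : AddSubgroup (Z →₀ ℤ))
    (hA : ∀ D : Z →₀ ℤ, D ∈ A ↔
      ((∀ i : ι, ∑ᶠ q ∈ ({q | comp q = i} : Set Z), D q = 0) ∧
        Finsupp.mapDomain π D = 0))
    -- the Lie part, as in the adic/residue model
    (m : Ideal (PowerSeries k)) (hm : m = Ideal.span {X})
    (OC : ∀ p : C, Subalgebra k ({q // π q = p} → PowerSeries k))
    (hfd : ∀ p, FiniteDimensional k
      (({q // π q = p} → PowerSeries k) ⧸ Subalgebra.toSubmodule (OC p)))
    (hiso : ∀ p : C, (∀ q : {q // π q = p}, q.1 ∉ S) → OC p = ⊤)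
    (V : Submodule k (⨁ _q : Z, (LaurentSeries k ⧸ lowSupp k 0)))
    (hV : ∀ δ, δ ∈ V ↔ ∀ (p : C) (g : {q // π q = p} → PowerSeries k),
      g ∈ OC p → (∀ q, constantCoeff (R := k) (g q) = 0) →
      ∀ F : Z → LaurentSeries k, (∀ q : Z, (lowSupp k 0).mkQ (F q) = δ q) →
      ∑ q : {q // π q = p},
        (F q.1 * ((derivativeFun (g q) : PowerSeries k) :
          LaurentSeries k)).coeff (-1) = 0) :
    -- Div⁰_{Z/C}(k) is free abelian of finite rank
    (∃ n : ℕ, Nonempty (↥A ≃+ (Fin n → ℤ))) ∧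
    -- Lie(Div⁰_{Z/C}) is a finite-dimensional k-vector space
    Module.Finite k ↥V := by
  classical
  constructor
  · exact part1_free π S hinj A (fun D hD => ((hA D).1 hD).2)
  · -- the Lie part
    letI : AddCommGroup ↥V := @Submodule.addCommGroup k (⨁ _q : Z, (LaurentSeries k ⧸ lowSupp k 0)) _ _ inferInstance V
    let Mp : ∀ p : C, Submodule k ({q // π q = p} → PowerSeries k) := fun p =>
      LinearMap.ker (LinearMap.pi fun q : {q // π q = p} =>
        (PowerSeries.coeff (R := k) 0).comp (LinearMap.proj q))
    have hMp : ∀ (p : C) (g : {q // π q = p} → PowerSeries k),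
        g ∈ Mp p ↔ ∀ q, constantCoeff (R := k) (g q) = 0 := by
      intro p g
      rw [show Mp p = LinearMap.ker (LinearMap.pi fun q : {q // π q = p} =>
          (PowerSeries.coeff (R := k) 0).comp (LinearMap.proj q)) from rfl, LinearMap.mem_ker,
        funext_iff]
      apply forall_congr'
      intro q
      rw [LinearMap.pi_apply, LinearMap.comp_apply, LinearMap.proj_apply,
        PowerSeries.coeff_zero_eq_constantCoeff, Pi.zero_apply]
    let T : ∀ p : C, Submodule k ({q // π q = p} → PowerSeries k) := fun p =>
      Subalgebra.toSubmodule (OC p)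
    let Np : ∀ p : C, Submodule k ↥(Mp p) := fun p => (T p).comap (Mp p).subtype
    have hQfd : ∀ p : C, FiniteDimensional k (↥(Mp p) ⧸ Np p) := by
      intro p
      haveI := hfd p
      let j : (↥(Mp p) ⧸ Np p) →ₗ[k] (({q // π q = p} → PowerSeries k) ⧸ T p) :=
        Submodule.mapQ (Np p) (T p) (Mp p).subtype le_rfl
      have hj : Function.Injective j := by
        rw [← LinearMap.ker_eq_bot, LinearMap.ker_eq_bot']
        intro x hx
        obtain ⟨g, rfl⟩ := Submodule.mkQ_surjective _ x
        rw [Submodule.mkQ_apply, Submodule.mapQ_apply, Submodule.Quotient.mk_eq_zero] at hx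
        rw [Submodule.mkQ_apply, Submodule.Quotient.mk_eq_zero]
        exact hx
      exact FiniteDimensional.of_injective j hj
    let L : (LaurentSeries k ⧸ lowSupp k 0) → LaurentSeries k :=
      Function.surjInv (Submodule.mkQ_surjective (lowSupp k 0))
    have hL : ∀ x, (lowSupp k 0).mkQ (L x) = x :=
      fun x => Function.surjInv_eq (Submodule.mkQ_surjective (lowSupp k 0)) x
    have hφmk : ∀ (δ : ⨁ _q : Z, (LaurentSeries k ⧸ lowSupp k 0)) (p : C) (g : ↥(Mp p)),
        phiAux (Mp p) (fun q => δ q.1) g =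
        ∑ q : {q // π q = p},
          ((L (δ q.1)) *
            ((derivativeFun ((g : {q // π q = p} → PowerSeries k) q) : PowerSeries k) :
              LaurentSeries k)).coeff (-1) := by
      intro δ p g
      rw [phiAux_apply]
      apply Finset.sum_congr rfl
      intro q _
      conv_lhs => rw [← hL (δ q.1)]
      rw [resMulQ_mk]
      rfl
    have hvanish : ∀ δ, δ ∈ V → ∀ (p : C) (g : ↥(Mp p)), g ∈ Np p →
        phiAux (Mp p) (fun q => δ q.1) g = 0 := by
      intro δ hδ p g hg
      rw [hφmk δ p g]
      exact (hV δ).1 hδ p g.1 ((Subalgebra.mem_toSubmodule (OC p)).mp hg) ((hMp p g.1).1 g.2)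
        (fun q => L (δ q)) (fun q => hL (δ q))
    let Ψ : ↥V →ₗ[k] ∀ p : {x // x ∈ Finset.image π S},
        Module.Dual k (↥(Mp p.1) ⧸ Np p.1) :=
      { toFun := fun δ => fun p =>
          Submodule.liftQ (Np p.1) (phiAux (Mp p.1) (fun q => δ.1 q.1))
            (fun g hg => hvanish δ.1 δ.2 p.1 g hg)
        map_add' := by
          intro a b
          funext p
          refine Submodule.linearMap_qext _ (LinearMap.ext fun g => ?_)
          simp only [LinearMap.comp_apply, Submodule.mkQ_apply, Submodule.liftQ_apply,
            Pi.add_apply, LinearMap.add_apply]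
          have h : (fun q : {q' // π q' = p.1} =>
              ((a + b : ↥V) : ⨁ _q : Z, (LaurentSeries k ⧸ lowSupp k 0)) q.1)
              = fun q : {q' // π q' = p.1} =>
              ((a : ⨁ _q : Z, (LaurentSeries k ⧸ lowSupp k 0)) q.1 +
               (b : ⨁ _q : Z, (LaurentSeries k ⧸ lowSupp k 0)) q.1) := by
            funext q
            rw [Submodule.coe_add, DirectSum.add_apply]
          exact (congrArg (fun ε => phiAux (Mp p.1) ε g) h).trans (phiAux_add_eps _ _ _ g)
        map_smul' := by
          intro c a
          funext p
          refine Submodule.linearMap_qext _ (LinearMap.ext fun g => ?_)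
          simp only [LinearMap.comp_apply, Submodule.mkQ_apply, Submodule.liftQ_apply,
            Pi.smul_apply, LinearMap.smul_apply, RingHom.id_apply, smul_eq_mul]
          have h : (fun q : {q' // π q' = p.1} =>
              ((c • a : ↥V) : ⨁ _q : Z, (LaurentSeries k ⧸ lowSupp k 0)) q.1)
              = fun q : {q' // π q' = p.1} =>
              c • ((a : ⨁ _q : Z, (LaurentSeries k ⧸ lowSupp k 0)) q.1) := by
            funext q
            rw [Submodule.coe_smul, DFinsupp.smul_apply]
          exact (congrArg (fun ε => phiAux (Mp p.1) ε g) h).trans (phiAux_smul_eps _ c _ g) }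
    haveI hfd2 : ∀ p : {x // x ∈ Finset.image π S},
        FiniteDimensional k (↥(Mp p.1) ⧸ Np p.1) := fun p => hQfd p.1
    have hΨ : Function.Injective Ψ := by
      refine (injective_iff_map_eq_zero Ψ).mpr ?_
      intro δv hδ0
      apply Subtype.ext
      refine DFinsupp.ext fun q => ?_
      rw [Submodule.coe_zero, DFinsupp.zero_apply]
      apply quot_eq_zero
      intro n hn
      by_cases hq : q ∈ S
      · have hp : π q ∈ Finset.image π S := Finset.mem_image_of_mem π hq
        have h0 : Submodule.liftQ (Np (π q)) (phiAux (Mp (π q)) (fun q' => δv.1 q'.1))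
            (fun g hg => hvanish δv.1 δv.2 (π q) g hg) = 0 := congrFun hδ0 ⟨π q, hp⟩
        let g0 : {q' // π q' = π q} → PowerSeries k :=
          fun q' => if q' = ⟨q, rfl⟩ then PowerSeries.X ^ n else 0
        have hg0 : g0 ∈ Mp (π q) := by
          rw [hMp]
          intro q'
          by_cases h : q' = ⟨q, rfl⟩
          · rw [show g0 q' = PowerSeries.X ^ n from if_pos h, map_pow,
              PowerSeries.constantCoeff_X, zero_pow (by omega)]
          · rw [show g0 q' = 0 from if_neg h, map_zero]
        have h1 := LinearMap.congr_fun h0 (Submodule.Quotient.mk ⟨g0, hg0⟩)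
        change phiAux (Mp (π q)) (fun q' => δv.1 q'.1) ⟨g0, hg0⟩ = (0 : k) at h1
        rw [phiAux_apply] at h1
        rw [Fintype.sum_eq_single (⟨q, rfl⟩ : {q' // π q' = π q})] at h1
        · have hgq : ((⟨g0, hg0⟩ : ↥(Mp (π q))) :
              {q' // π q' = π q} → PowerSeries k) ⟨q, rfl⟩ = PowerSeries.X ^ n := if_pos rfl
          rw [hgq] at h1
          exact h1
        · intro b hb
          have hgb : ((⟨g0, hg0⟩ : ↥(Mp (π q))) :
              {q' // π q' = π q} → PowerSeries k) b = 0 := if_neg hb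
          rw [hgb, derivativeFun_zero', resMulQ_zero']
      · haveI : Subsingleton {q' // π q' = π q} :=
          ⟨fun a b => Subtype.ext (by rw [hinj q hq a.1 a.2, hinj q hq b.1 b.2])⟩
        have hOC : OC (π q) = ⊤ := hiso (π q) (fun q' => by
          rw [hinj q hq q'.1 q'.2]; exact hq)
        have hres := (hV δv.1).1 δv.2 (π q) (fun _ => PowerSeries.X ^ n)
          (by rw [hOC]; exact Algebra.mem_top)
          (fun q' => by rw [map_pow, PowerSeries.constantCoeff_X, zero_pow (by omega)])
          (fun q' => L (δv.1 q')) (fun q' => hL (δv.1 q'))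
        rw [Fintype.sum_eq_single (⟨q, rfl⟩ : {q' // π q' = π q})
          (fun b hb => absurd (Subsingleton.elim b ⟨q, rfl⟩) hb)] at hres
        have heq : resMulQ (derivativeFun (PowerSeries.X ^ n)) (δv.1 q)
            = resMul (derivativeFun (PowerSeries.X ^ n)) (L (δv.1 q)) := by
          conv_lhs => rw [← hL (δv.1 q)]
          rw [resMulQ_mk]
        rw [heq]
        exact hres
    haveI : ∀ p : {x // x ∈ Finset.image π S},
        FiniteDimensional k (Module.Dual k (↥(Mp p.1) ⧸ Np p.1)) := fun p => inferInstance
    exact FiniteDimensional.of_injective Ψ hΨ
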